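/- With h defined from binary digits by h(k) = Σ_{i≥1} β_i 2^{⌊(i−1)/2⌋}: if k ≡ 0 or 1 (mod 4) then h(k+2) = h(k) + 1, and if k ≡ 2 or 3 (mod 4) then h(k+2) ≤ h(k). -/

import Mathlib

/-- `h k = Σ_{i≥1} β_i 2^{⌊(i−1)/2⌋}` where `β_i` are the binary digits of `k`. -/
def h (k : ℕ) : ℕ := ∑ i ∈ Finset.Icc 1 k, if k.testBit i then 2 ^ ((i - 1) / 2) else 0

/-- Truncated sum of bits weighted by `2^(i/2)`. -/
def G (n N : ℕ) : ℕ := ∑ i ∈ Finset.range N, if n.testBit i then 2 ^ (i / 2) else 0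

def g (n : ℕ) : ℕ := G n n

lemma G_stable {n N M : ℕ} (hN : n ≤ N) (hM : N ≤ M) : G n N = G n M := by
  unfold G
  apply Finset.sum_subset (Finset.range_subset_range.2 hM)
  intro i _ hi
  simp only [Finset.mem_range, not_lt] at hi
  rw [Nat.testBit_eq_false_of_lt]
  · simp
  · calc n < 2 ^ n := Nat.lt_two_pow_self
      _ ≤ 2 ^ i := Nat.pow_le_pow_right (by norm_num) (le_trans hN hi)

lemma h_eq (k : ℕ) : h k = g (k / 2) := by
  have : g (k / 2) = G (k / 2) k := G_stable le_rfl (Nat.div_le_self k 2)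
  rw [this]
  unfold h G
  rw [show Finset.Icc 1 k = Finset.map ⟨fun i => i + 1, add_left_injective 1⟩
      (Finset.range k) from by
    ext a
    simp only [Finset.mem_Icc, Finset.mem_map, Finset.mem_range,
      Function.Embedding.coeFn_mk]
    constructor
    · rintro ⟨h1, h2⟩; exact ⟨a - 1, by omega, by omega⟩
    · rintro ⟨b, hb, rfl⟩; omega]
  rw [Finset.sum_map]
  apply Finset.sum_congr rfl
  intro i _
  simp only [Function.Embedding.coeFn_mk, Nat.add_sub_cancel]
  rw [Nat.testBit_succ]

lemma g_rec (n : ℕ) : g n = n % 2 + n / 2 % 2 + 2 * g (n / 4) := by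
  have h1 : g n = G n (n + 2) := G_stable le_rfl (by omega)
  have h2 : g (n / 4) = G (n / 4) n :=
    G_stable le_rfl (Nat.div_le_self n 4)
  rw [h1, h2]
  unfold G
  rw [Finset.sum_range_succ', Finset.sum_range_succ']
  have ht : ∀ i, n.testBit (i + 1 + 1) = (n / 4).testBit i := by
    intro i
    rw [Nat.testBit_succ, Nat.testBit_succ, Nat.div_div_eq_div_mul]
  have hsum : ∑ i ∈ Finset.range n,
      (if n.testBit (i + 1 + 1) then 2 ^ ((i + 1 + 1) / 2) else 0)
      = 2 * ∑ i ∈ Finset.range n, (if (n / 4).testBit i then 2 ^ (i / 2) else 0) := by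
    rw [Finset.mul_sum]
    apply Finset.sum_congr rfl
    intro i _
    rw [ht i]
    have : (i + 1 + 1) / 2 = i / 2 + 1 := by omega
    rw [this, pow_succ]
    split <;> ring
  rw [hsum]
  have h0 : (if n.testBit 0 then 2 ^ (0 / 2) else 0) = n % 2 := by
    rw [Nat.testBit_zero]
    rcases Nat.even_or_odd n with he | he
    · simp [Nat.even_iff.mp he]
    · simp [Nat.odd_iff.mp he]
  have h1' : (if n.testBit (0 + 1) then 2 ^ ((0 + 1) / 2) else 0) = n / 2 % 2 := by
    rw [Nat.testBit_succ, Nat.testBit_zero]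
    rcases Nat.even_or_odd (n / 2) with he | he
    · simp [Nat.even_iff.mp he]
    · simp [Nat.odd_iff.mp he]
  rw [h0, h1']
  ring

lemma g_odd (q : ℕ) : g (2 * q + 1) = g (2 * q) + 1 := by
  rw [g_rec (2 * q + 1), g_rec (2 * q)]
  have e1 : (2 * q + 1) / 4 = (2 * q) / 4 := by omega
  rw [e1]
  omega

lemma g_succ_le (n : ℕ) : g (n + 1) ≤ g n + 1 := by
  induction n using Nat.strong_induction_on with
  | _ n ih =>
    rw [g_rec (n + 1), g_rec n]
    rcases (show n % 4 = 0 ∨ n % 4 = 1 ∨ n % 4 = 2 ∨ n % 4 = 3 by omega) with h | h | h | h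
    · have e : (n + 1) / 4 = n / 4 := by omega
      rw [e]; omega
    · have e : (n + 1) / 4 = n / 4 := by omega
      rw [e]; omega
    · have e : (n + 1) / 4 = n / 4 := by omega
      rw [e]; omega
    · have e : (n + 1) / 4 = n / 4 + 1 := by omega
      rw [e]
      have := ih (n / 4) (by omega)
      omega

lemma g_even_le (q : ℕ) : g (2 * q + 2) ≤ g (2 * q + 1) := by
  rcases Nat.even_or_odd q with ⟨m, hm⟩ | ⟨m, hm⟩ <;> subst hm
  · rw [g_rec (2 * (m + m) + 2), g_rec (2 * (m + m) + 1)]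
    have e1 : (2 * (m + m) + 2) / 4 = m := by omega
    have e2 : (2 * (m + m) + 1) / 4 = m := by omega
    rw [e1, e2]
    omega
  · rw [g_rec (2 * (2 * m + 1) + 2), g_rec (2 * (2 * m + 1) + 1)]
    have e1 : (2 * (2 * m + 1) + 2) / 4 = m + 1 := by omega
    have e2 : (2 * (2 * m + 1) + 1) / 4 = m := by omega
    rw [e1, e2]
    have := g_succ_le m
    omega

theorem h_add_two (k : ℕ) :
    ((k % 4 = 0 ∨ k % 4 = 1) → h (k + 2) = h k + 1) ∧
    ((k % 4 = 2 ∨ k % 4 = 3) → h (k + 2) ≤ h k) := by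
  constructor
  · intro hk
    rw [h_eq, h_eq]
    have e1 : (k + 2) / 2 = 2 * (k / 4) + 1 := by omega
    have e2 : k / 2 = 2 * (k / 4) := by omega
    rw [e1, e2, g_odd]
  · intro hk
    rw [h_eq, h_eq]
    have e1 : (k + 2) / 2 = 2 * (k / 4) + 2 := by omega
    have e2 : k / 2 = 2 * (k / 4) + 1 := by omega
    rw [e1, e2]
    exact g_even_le _
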